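/- Let ρ be a qubit density matrix and n ∈ ℝ³ a unit vector. Then there exists a pure-state decomposition ρ = ∑ₖ pₖ |ψₖ⟩⟨ψₖ| with at most two elements whose average variance attains the minimal value: ∑ₖ pₖ (ΔL_n)²_{ψₖ} = (ΔL_n)²_ρ − (1 − Tr(ρ²))/2. (Geometrically, this minimal decomposition corresponds to the chord through the Bloch vector of ρ that is parallel to n.) -/

import Mathlib

open Matrix BigOperators
open scoped ComplexOrder

/-- The Pauli matrix σx. -/
def sigmaX : Matrix (Fin 2) (Fin 2) ℂ := !![0, 1; 1, 0]

/-- The Pauli matrix σy. -/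
def sigmaY : Matrix (Fin 2) (Fin 2) ℂ := !![0, -Complex.I; Complex.I, 0]

/-- The Pauli matrix σz. -/
def sigmaZ : Matrix (Fin 2) (Fin 2) ℂ := !![1, 0; 0, -1]

/-- The spin-1/2 operator L_n = (n₁σx + n₂σy + n₃σz)/2 along the direction n ∈ ℝ³. -/
noncomputable def Lspin (n : Fin 3 → ℝ) : Matrix (Fin 2) (Fin 2) ℂ :=
  (1 / 2 : ℂ) • ((n 0 : ℂ) • sigmaX + (n 1 : ℂ) • sigmaY + (n 2 : ℂ) • sigmaZ)

/-- A qubit density matrix: 2×2 positive semidefinite with unit trace. -/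
def IsDensity (ρ : Matrix (Fin 2) (Fin 2) ℂ) : Prop :=
  ρ.PosSemidef ∧ ρ.trace = 1

/-- The rank-one projection |ψ⟩⟨ψ|. -/
def ketbra (ψ : Fin 2 → ℂ) : Matrix (Fin 2) (Fin 2) ℂ :=
  Matrix.vecMulVec ψ (star ψ)

/-- Pure-state variance (ΔA)²_ψ = ⟨ψ, A²ψ⟩ − ⟨ψ, Aψ⟩². -/
noncomputable def pureVar (A : Matrix (Fin 2) (Fin 2) ℂ) (ψ : Fin 2 → ℂ) : ℝ :=
  (star ψ ⬝ᵥ (A * A).mulVec ψ).re - ((star ψ ⬝ᵥ A.mulVec ψ).re) ^ 2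

/-- Mixed-state variance (ΔA)²_ρ = Tr(A²ρ) − (Tr(Aρ))². -/
noncomputable def mixVar (A ρ : Matrix (Fin 2) (Fin 2) ℂ) : ℝ :=
  ((A * A * ρ).trace).re - (((A * ρ).trace).re) ^ 2

/-- The purity Tr(ρ²). -/
noncomputable def purity (ρ : Matrix (Fin 2) (Fin 2) ℂ) : ℝ :=
  ((ρ * ρ).trace).re

/-- Bloch-parametrised matrix (I + a·σ)/2. -/
noncomputable def Bmat (a0 a1 a2 : ℝ) : Matrix (Fin 2) (Fin 2) ℂ :=
  !![((1+a2)/2 : ℂ), ((a0 : ℂ) - a1*Complex.I)/2;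
     ((a0:ℂ) + a1*Complex.I)/2, ((1-a2)/2 : ℂ)]

lemma trace_mul_ketbra (A : Matrix (Fin 2) (Fin 2) ℂ) (ψ : Fin 2 → ℂ) :
    (A * ketbra ψ).trace = star ψ ⬝ᵥ A.mulVec ψ := by
  simp [ketbra, Matrix.trace, Matrix.mul_apply, Matrix.vecMulVec_apply,
    dotProduct, Matrix.mulVec, Fin.sum_univ_two]
  ring

lemma trace_ketbra (ψ : Fin 2 → ℂ) : (ketbra ψ).trace = star ψ ⬝ᵥ ψ := by
  simp [ketbra, Matrix.trace, Matrix.vecMulVec_apply, dotProduct, Fin.sum_univ_two]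
  ring

lemma ketbra_eq_Bmat (a0 a1 a2 : ℝ) (h : a0^2+a1^2+a2^2 = 1) :
    ∃ ψ : Fin 2 → ℂ, ketbra ψ = Bmat a0 a1 a2 := by
  by_cases hc : a2 = -1
  · have h0 : a0 = 0 := by nlinarith
    have h1 : a1 = 0 := by nlinarith
    refine ⟨![0, 1], ?_⟩
    ext i j
    fin_cases i <;> fin_cases j <;>
      simp [ketbra, Matrix.vecMulVec_apply, Bmat, h0, h1, hc]
  · have hm1 : -1 ≤ a2 := by nlinarith
    have h1 : 0 < 1 + a2 := lt_of_le_of_ne (by linarith) (fun he => hc (by linarith))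
    set c : ℝ := Real.sqrt ((1+a2)/2) with hcdef
    have hc2 : c^2 = (1+a2)/2 := Real.sq_sqrt (by linarith)
    have hcpos : 0 < c := Real.sqrt_pos.2 (by linarith)
    have hcne : (c:ℂ) ≠ 0 := by exact_mod_cast hcpos.ne'
    have hc2' : (c:ℂ)^2 = (1+(a2:ℂ))/2 := by exact_mod_cast congrArg Complex.ofReal hc2
    have h' : (a0:ℂ)^2+(a1:ℂ)^2+(a2:ℂ)^2 = 1 := by exact_mod_cast congrArg (Complex.ofReal) h
    refine ⟨![(c:ℂ), ((a0:ℂ) + a1*Complex.I)/(2*c)], ?_⟩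
    ext i j
    fin_cases i <;> fin_cases j <;>
      simp [ketbra, Matrix.vecMulVec_apply, Bmat, map_div₀, Complex.conj_ofReal,
        map_add, _root_.map_mul, Complex.conj_I, Complex.conj_ofNat]
    · linear_combination hc2'
    · field_simp; ring
    · field_simp
    · field_simp
      linear_combination h' - (2-2*(a2:ℂ))*hc2' - (a1:ℂ)^2*Complex.I_sq

lemma norm_of_ketbra_eq (ψ : Fin 2 → ℂ) (a0 a1 a2 : ℝ)
    (hB : ketbra ψ = Bmat a0 a1 a2) : star ψ ⬝ᵥ ψ = 1 := by
  rw [← trace_ketbra, hB]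
  simp [Bmat, Matrix.trace, Fin.sum_univ_two]
  ring

lemma trace_Bmat (a0 a1 a2 : ℝ) : (Bmat a0 a1 a2).trace = 1 := by
  simp [Bmat, Matrix.trace, Fin.sum_univ_two]; ring

lemma trace_L_Bmat (n : Fin 3 → ℝ) (a0 a1 a2 : ℝ) :
    ((Lspin n * Bmat a0 a1 a2).trace).re = (n 0 * a0 + n 1 * a1 + n 2 * a2)/2 := by
  simp [Lspin, sigmaX, sigmaY, sigmaZ, Bmat, Matrix.trace, Matrix.mul_apply,
    Fin.sum_univ_two, Complex.add_re, Complex.mul_re, Complex.mul_im]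
  ring

lemma Lsq (n : Fin 3 → ℝ) (hn : n 0^2 + n 1^2 + n 2^2 = 1) :
    Lspin n * Lspin n = (1/4 : ℂ) • 1 := by
  have h' : (n 0:ℂ)^2+(n 1:ℂ)^2+(n 2:ℂ)^2 = 1 := by exact_mod_cast congrArg Complex.ofReal hn
  ext i j
  fin_cases i <;> fin_cases j <;>
    simp [Lspin, sigmaX, sigmaY, sigmaZ, Matrix.mul_apply, Fin.sum_univ_two,
      Matrix.one_apply]
  · linear_combination h'/4 - (n 1:ℂ)^2/4*Complex.I_sq
  · ring
  · ring
  · linear_combination h'/4 - (n 1:ℂ)^2/4*Complex.I_sq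

lemma trace_LL_Bmat (n : Fin 3 → ℝ) (hn : n 0^2 + n 1^2 + n 2^2 = 1) (a0 a1 a2 : ℝ) :
    (((Lspin n * Lspin n) * Bmat a0 a1 a2).trace).re = 1/4 := by
  rw [Lsq n hn, Matrix.smul_mul, Matrix.one_mul, Matrix.trace_smul]
  rw [trace_Bmat]
  simp

lemma purity_Bmat (a0 a1 a2 : ℝ) :
    ((Bmat a0 a1 a2 * Bmat a0 a1 a2).trace).re = (1 + (a0^2+a1^2+a2^2))/2 := by
  simp [Bmat, Matrix.trace, Matrix.mul_apply, Fin.sum_univ_two,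
    Complex.add_re, Complex.mul_re, Complex.mul_im]
  ring

lemma Bmat_convex (p q : ℝ) (hpq : p + q = 1) (a0 a1 a2 b0 b1 b2 : ℝ) :
    p • Bmat a0 a1 a2 + q • Bmat b0 b1 b2
      = Bmat (p*a0+q*b0) (p*a1+q*b1) (p*a2+q*b2) := by
  have h' : (p:ℂ) + q = 1 := by exact_mod_cast congrArg Complex.ofReal hpq
  ext i j
  fin_cases i <;> fin_cases j <;>
    simp [Bmat, Matrix.add_apply, Matrix.smul_apply, Complex.real_smul]
  · push_cast; linear_combination (1/2:ℂ)*h'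
  · push_cast; ring
  · push_cast; ring
  · push_cast; linear_combination (1/2:ℂ)*h'

lemma pureVar_eq (n : Fin 3 → ℝ) (hn : n 0^2 + n 1^2 + n 2^2 = 1) (a0 a1 a2 : ℝ)
    (ψ : Fin 2 → ℂ) (hK : ketbra ψ = Bmat a0 a1 a2) :
    pureVar (Lspin n) ψ = 1/4 - ((n 0 * a0 + n 1 * a1 + n 2 * a2)/2)^2 := by
  unfold pureVar
  rw [← trace_mul_ketbra, ← trace_mul_ketbra, hK, trace_LL_Bmat n hn, trace_L_Bmat]

lemma rho_eq_Bmat (ρ : Matrix (Fin 2) (Fin 2) ℂ) (hH : ρ.IsHermitian) (htr : ρ.trace = 1) :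
    ρ = Bmat (2*(ρ 0 1).re) (-2*(ρ 0 1).im) ((ρ 0 0).re - (ρ 1 1).re) := by
  have h10 : star (ρ 0 1) = ρ 1 0 := hH.apply 1 0
  have h00 : star (ρ 0 0) = ρ 0 0 := hH.apply 0 0
  have h11 : star (ρ 1 1) = ρ 1 1 := hH.apply 1 1
  have h00im : (ρ 0 0).im = 0 := Complex.conj_eq_iff_im.mp h00
  have h11im : (ρ 1 1).im = 0 := Complex.conj_eq_iff_im.mp h11
  have htr' : ρ 0 0 + ρ 1 1 = 1 := by
    rw [← htr]; simp [Matrix.trace, Fin.sum_univ_two]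
  have htrre : (ρ 0 0).re + (ρ 1 1).re = 1 := by
    have := congrArg Complex.re htr'; simpa using this
  ext i j
  fin_cases i <;> fin_cases j <;>
    simp [Bmat, ← h10, Complex.ext_iff, Complex.div_re, Complex.div_im, h00im, h11im,
      Complex.star_def, Complex.conj_re, Complex.conj_im] <;>
    try constructor
  all_goals try linarith

set_option maxHeartbeats 1000000 in
/-- There exists a pure-state decomposition of a qubit state ρ with at most two elements
whose average variance attains the minimal value (ΔL_n)²_ρ − (1 − Tr ρ²)/2. -/
theorem stmt_7 (ρ : Matrix (Fin 2) (Fin 2) ℂ) (hρ : IsDensity ρ)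
    (n : Fin 3 → ℝ) (hn : n ⬝ᵥ n = 1) :
    ∃ (p : Fin 2 → ℝ) (ψ : Fin 2 → (Fin 2 → ℂ)),
      (∀ k, 0 ≤ p k) ∧ (∑ k, p k) = 1 ∧
      (∀ k, star (ψ k) ⬝ᵥ ψ k = 1) ∧
      ρ = (∑ k, p k • ketbra (ψ k)) ∧
      (∑ k, p k * pureVar (Lspin n) (ψ k))
        = mixVar (Lspin n) ρ - (1 - purity ρ) / 2 := by
  obtain ⟨hpsd, htr⟩ := hρ
  have hn' : n 0^2 + n 1^2 + n 2^2 = 1 := by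
    have h := hn
    simp [dotProduct, Fin.sum_univ_three] at h
    nlinarith [h]
  obtain ⟨r1, r2, r3, hρB⟩ : ∃ a b c, ρ = Bmat a b c :=
    ⟨_, _, _, rho_eq_Bmat ρ hpsd.1 htr⟩
  have hdet0 : 0 ≤ (ρ.det).re := by
    rw [hpsd.1.det_eq_prod_eigenvalues]
    simp [Fin.prod_univ_two]
    have h0 := hpsd.eigenvalues_nonneg 0
    have h1 := hpsd.eigenvalues_nonneg 1
    positivity
  have hR : r1^2 + r2^2 + r3^2 ≤ 1 := by
    rw [hρB] at hdet0
    simp [Matrix.det_fin_two, Bmat, Complex.sub_re, Complex.mul_re, Complex.mul_im,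
      Complex.add_re, Complex.add_im, Complex.div_re, Complex.div_im] at hdet0
    nlinarith [hdet0]
  obtain ⟨s, hs⟩ : ∃ x : ℝ, x = n 0 * r1 + n 1 * r2 + n 2 * r3 := ⟨_, rfl⟩
  obtain ⟨D, hD⟩ : ∃ x : ℝ, x = s^2 + 1 - (r1^2 + r2^2 + r3^2) := ⟨_, rfl⟩
  have hDnn : 0 ≤ D := by rw [hD]; nlinarith
  obtain ⟨q, hq⟩ : ∃ x : ℝ, x = Real.sqrt D := ⟨_, rfl⟩
  have hq2 : q^2 = D := by rw [hq]; exact Real.sq_sqrt hDnn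
  have hqnn : 0 ≤ q := by rw [hq]; exact Real.sqrt_nonneg D
  have hs2q : s^2 ≤ q^2 := by rw [hq2, hD]; nlinarith
  obtain ⟨p0, hp0def⟩ : ∃ x : ℝ, x = 1/2 + s/(2*q) := ⟨_, rfl⟩
  obtain ⟨p1, hp1def⟩ : ∃ x : ℝ, x = 1/2 - s/(2*q) := ⟨_, rfl⟩
  have hsum : p0 + p1 = 1 := by rw [hp0def, hp1def]; ring
  have hp0 : 0 ≤ p0 := by
    rw [hp0def]
    by_cases hq0 : q = 0
    · simp [hq0]
    · have hqpos : 0 < q := lt_of_le_of_ne hqnn (Ne.symm hq0)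
      have hle : -q ≤ s := by nlinarith
      have heq : 1/2 + s/(2*q) = (q + s)/(2*q) := by
        field_simp
        try ring
      rw [heq]
      exact div_nonneg (by linarith) (by linarith)
  have hp1 : 0 ≤ p1 := by
    rw [hp1def]
    by_cases hq0 : q = 0
    · simp [hq0]
    · have hqpos : 0 < q := lt_of_le_of_ne hqnn (Ne.symm hq0)
      have hle : s ≤ q := by nlinarith
      have heq : 1/2 - s/(2*q) = (q - s)/(2*q) := by
        field_simp
        try ring
      rw [heq]
      exact div_nonneg (by linarith) (by linarith)
  obtain ⟨tp, htp⟩ : ∃ x : ℝ, x = -s + q := ⟨_, rfl⟩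
  obtain ⟨tm, htm⟩ : ∃ x : ℝ, x = -s - q := ⟨_, rfl⟩
  have hs0ofq0 : q = 0 → s = 0 := by
    intro hq0
    have h0 : (0:ℝ) = D := by rw [← hq2, hq0]; ring
    nlinarith [hR]
  have he : p0 * tp + p1 * tm = 0 := by
    by_cases hq0 : q = 0
    · have hs0 := hs0ofq0 hq0
      rw [hp0def, hp1def, htp, htm, hq0, hs0]
      norm_num
    · rw [hp0def, hp1def, htp, htm]
      field_simp
      ring
  have hap : (r1 + tp * n 0)^2 + (r2 + tp * n 1)^2 + (r3 + tp * n 2)^2 = 1 := by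
    have h1 : tp^2 + 2*tp*s = q^2 - s^2 := by rw [htp]; ring
    linear_combination tp^2 * hn' - 2*tp*hs + h1 + hq2 + hD
  have ham : (r1 + tm * n 0)^2 + (r2 + tm * n 1)^2 + (r3 + tm * n 2)^2 = 1 := by
    have h1 : tm^2 + 2*tm*s = q^2 - s^2 := by rw [htm]; ring
    linear_combination tm^2 * hn' - 2*tm*hs + h1 + hq2 + hD
  obtain ⟨ψp, hKp⟩ := ketbra_eq_Bmat _ _ _ hap
  obtain ⟨ψm, hKm⟩ := ketbra_eq_Bmat _ _ _ ham
  refine ⟨![p0, p1], ![ψp, ψm], ?_, ?_, ?_, ?_, ?_⟩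
  · intro k
    fin_cases k
    · simpa using hp0
    · simpa using hp1
  · simp [Fin.sum_univ_two, hsum]
  · intro k
    fin_cases k
    · simpa using norm_of_ketbra_eq ψp _ _ _ hKp
    · simpa using norm_of_ketbra_eq ψm _ _ _ hKm
  · rw [Fin.sum_univ_two]
    simp only [Matrix.cons_val_zero, Matrix.cons_val_one, Matrix.head_cons]
    rw [hKp, hKm, Bmat_convex p0 p1 hsum]
    have e0 : p0*(r1 + tp * n 0) + p1*(r1 + tm * n 0) = r1 := by
      linear_combination n 0 * he + r1 * hsum
    have e1 : p0*(r2 + tp * n 1) + p1*(r2 + tm * n 1) = r2 := by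
      linear_combination n 1 * he + r2 * hsum
    have e2 : p0*(r3 + tp * n 2) + p1*(r3 + tm * n 2) = r3 := by
      linear_combination n 2 * he + r3 * hsum
    rw [e0, e1, e2]
    exact hρB
  · rw [Fin.sum_univ_two]
    simp only [Matrix.cons_val_zero, Matrix.cons_val_one, Matrix.head_cons]
    rw [pureVar_eq n hn' _ _ _ ψp hKp, pureVar_eq n hn' _ _ _ ψm hKm]
    have hnap : n 0 * (r1 + tp * n 0) + n 1 * (r2 + tp * n 1) + n 2 * (r3 + tp * n 2) = q := by
      rw [htp]; linear_combination (-s+q) * hn' - hs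
    have hnam : n 0 * (r1 + tm * n 0) + n 1 * (r2 + tm * n 1) + n 2 * (r3 + tm * n 2) = -q := by
      rw [htm]; linear_combination (-s-q) * hn' - hs
    rw [hnap, hnam, hρB]
    unfold mixVar purity
    rw [trace_LL_Bmat n hn', trace_L_Bmat, purity_Bmat]
    linear_combination (1/4 - q^2/4)*hsum - hq2/4 - hD/4
      - ((s + (n 0*r1 + n 1*r2 + n 2*r3))/4)*hs
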